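/- Let f(p) = λ_min(VᵀDA + AᵀDV − AᵀSDA) with D = diag(pᵢ/⟨aᵢ, vᵢ⟩), S = diag(sᵢ), sᵢ = ‖vᵢ‖²/⟨aᵢ, vᵢ⟩. If x is a unit eigenvector of VᵀDA + AᵀDV − AᵀSDA corresponding to the smallest eigenvalue at a point p, then the vector g with gᵢ = ⟨2vᵢ − sᵢaᵢ, x⟩⟨aᵢ, x⟩/⟨aᵢ, vᵢ⟩ is a supergradient of f at p, i.e., f(q) ≤ f(p) + ⟨g, q − p⟩ for all q ∈ ℝᵐ. -/

import Mathlib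

open Matrix Finset

lemma quadform_eq {m n : ℕ} (C E : Matrix (Fin m) (Fin n) ℝ) (d : Fin m → ℝ) (x : Fin n → ℝ) :
    x ⬝ᵥ (Cᵀ * Matrix.diagonal d * E) *ᵥ x = ∑ i, d i * (C i ⬝ᵥ x) * (E i ⬝ᵥ x) := by
  rw [Matrix.mul_assoc, ← Matrix.mulVec_mulVec, Matrix.dotProduct_mulVec, Matrix.vecMul_transpose,
    ← Matrix.mulVec_mulVec]
  simp only [dotProduct]
  simp only [Matrix.mulVec_diagonal]
  simp only [Matrix.mulVec, dotProduct]
  exact Finset.sum_congr rfl fun i _ => by ring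

lemma rayleigh_le {n : ℕ} (hn : 0 < n) (B : Matrix (Fin n) (Fin n) ℝ) (hB : B.IsHermitian)
    (x : Fin n → ℝ) (hx : x ⬝ᵥ x = 1) : (⨅ j, hB.eigenvalues j) ≤ x ⬝ᵥ B *ᵥ x := by
  haveI : NeZero n := ⟨hn.ne'⟩
  set U : Matrix (Fin n) (Fin n) ℝ := (hB.eigenvectorUnitary : Matrix (Fin n) (Fin n) ℝ) with hU
  have hUs : star U = Uᵀ := by
    rw [Matrix.star_eq_conjTranspose, Matrix.conjTranspose_eq_transpose_of_trivial]
  have hU1 : U * Uᵀ = 1 := by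
    rw [← hUs]; exact (Unitary.mem_iff.mp hB.eigenvectorUnitary.2).2
  set y : Fin n → ℝ := Uᵀ *ᵥ x with hy
  have hyy : y ⬝ᵥ y = 1 := by
    rw [hy, Matrix.dotProduct_mulVec, ← Matrix.vecMul_transpose, Matrix.transpose_transpose,
      Matrix.vecMul_vecMul, hU1, Matrix.vecMul_one, hx]
  have hsp : x ⬝ᵥ B *ᵥ x = ∑ j, hB.eigenvalues j * (y j * y j) := by
    conv_lhs => rw [hB.spectral_theorem]
    rw [Unitary.conjStarAlgAut_apply, ← hU, hUs, Matrix.mul_assoc, ← Matrix.mulVec_mulVec, Matrix.dotProduct_mulVec,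
      ← Matrix.mulVec_transpose, ← Matrix.mulVec_mulVec, ← hy]
    simp only [dotProduct, Matrix.mulVec_diagonal, Function.comp, RCLike.ofReal_real_eq_id, id]
    exact Finset.sum_congr rfl fun i _ => by ring
  rw [hsp]
  have hb : BddBelow (Set.range hB.eigenvalues) := Set.Finite.bddBelow (Set.finite_range _)
  have h2 : ∑ j, y j * y j = 1 := by simpa [dotProduct] using hyy
  calc (⨅ j, hB.eigenvalues j) = ∑ j, (⨅ j, hB.eigenvalues j) * (y j * y j) := by
        rw [← Finset.mul_sum, h2, mul_one]
    _ ≤ ∑ j, hB.eigenvalues j * (y j * y j) :=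
        Finset.sum_le_sum fun j _ => mul_le_mul_of_nonneg_right (ciInf_le hb j) (mul_self_nonneg _)


noncomputable def enorm' {n : ℕ} (v : Fin n → ℝ) : ℝ := Real.sqrt (v ⬝ᵥ v)

theorem supergradient_of_lambda_min {m n : ℕ} (hn : 0 < n)
    (A V : Matrix (Fin m) (Fin n) ℝ)
    (hav : ∀ i, 0 < A i ⬝ᵥ V i)
    (s : Fin m → ℝ) (hs : s = fun i => (enorm' (V i)) ^ 2 / (A i ⬝ᵥ V i))
    (M : (Fin m → ℝ) → Matrix (Fin n) (Fin n) ℝ)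
    (hMdef : ∀ q, M q =
      Vᵀ * Matrix.diagonal (fun i => q i / (A i ⬝ᵥ V i)) * A
      + Aᵀ * Matrix.diagonal (fun i => q i / (A i ⬝ᵥ V i)) * V
      - Aᵀ * Matrix.diagonal s * Matrix.diagonal (fun i => q i / (A i ⬝ᵥ V i)) * A)
    (hM : ∀ q, (M q).IsHermitian)
    (p : Fin m → ℝ) (x : Fin n → ℝ) (hx : enorm' x = 1)
    (heig : (M p).mulVec x = (⨅ j, (hM p).eigenvalues j) • x)
    (g : Fin m → ℝ)
    (hg : g = fun i => (((2 : ℝ) • V i - s i • A i) ⬝ᵥ x) * (A i ⬝ᵥ x) / (A i ⬝ᵥ V i)) :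
    ∀ q : Fin m → ℝ,
      (⨅ j, (hM q).eigenvalues j) ≤ (⨅ j, (hM p).eigenvalues j) + g ⬝ᵥ (q - p) := by
  have hx1 : x ⬝ᵥ x = 1 := by
    have h0 : 0 ≤ x ⬝ᵥ x := by
      simp only [dotProduct]
      exact Finset.sum_nonneg fun i _ => mul_self_nonneg _
    have := hx
    unfold enorm' at this
    nlinarith [Real.sq_sqrt h0, Real.sqrt_nonneg (x ⬝ᵥ x)]
  -- quadratic form equals g ⬝ᵥ q for every q
  have key : ∀ q : Fin m → ℝ, x ⬝ᵥ (M q) *ᵥ x = g ⬝ᵥ q := by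
    intro q
    have hthird : Aᵀ * Matrix.diagonal s * Matrix.diagonal (fun i => q i / (A i ⬝ᵥ V i)) * A
        = Aᵀ * Matrix.diagonal (fun i => s i * (q i / (A i ⬝ᵥ V i))) * A := by
      rw [Matrix.mul_assoc Aᵀ, Matrix.diagonal_mul_diagonal]
    rw [hMdef q, hthird, Matrix.sub_mulVec, Matrix.add_mulVec, dotProduct_sub,
      dotProduct_add, quadform_eq, quadform_eq, quadform_eq]
    simp only [dotProduct, hg, Pi.sub_apply, Pi.smul_apply, smul_eq_mul]
    rw [← Finset.sum_add_distrib, ← Finset.sum_sub_distrib]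
    refine Finset.sum_congr rfl fun i _ => ?_
    have hne : A i ⬝ᵥ V i ≠ 0 := (hav i).ne'
    simp only [dotProduct] at hne ⊢
    have hexp : ∑ j, (2 * V i j - s i * A i j) * x j
        = 2 * (∑ j, V i j * x j) - s i * ∑ j, A i j * x j := by
      rw [Finset.mul_sum, Finset.mul_sum, ← Finset.sum_sub_distrib]
      exact Finset.sum_congr rfl fun j _ => by ring
    rw [hexp]
    field_simp
    ring
  have hgp : g ⬝ᵥ p = ⨅ j, (hM p).eigenvalues j := by
    have := key p
    rw [heig] at this
    rw [dotProduct_smul, smul_eq_mul, hx1, mul_one] at this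
    exact this.symm
  intro q
  calc (⨅ j, (hM q).eigenvalues j) ≤ x ⬝ᵥ (M q) *ᵥ x := rayleigh_le hn (M q) (hM q) x hx1
    _ = g ⬝ᵥ q := key q
    _ = (⨅ j, (hM p).eigenvalues j) + g ⬝ᵥ (q - p) := by
        rw [dotProduct_sub, hgp]; ring
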